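/- Monotonicity of star networks: let C₁, C'₁, C₂ be star-configurations of a 1-phase-bounded broadcast protocol with C₁ → C'₁ and C₁ ⪯ C₂. Then there exists a star-configuration C'₂ with C'₁ ⪯ C'₂ and C₂ →* C'₂. -/

import Mathlib

namespace BN

/-- Actions of a broadcast protocol: broadcast `!!m`, reception `?m`, internal `τ`. -/
inductive Act (M : Type) : Type where
  | brd : M → Act M
  | rcv : M → Act M
  | tau : Act M

/-- A broadcast protocol: an initial state and a set of transitions. -/
structure Protocol (Q M : Type) : Type where
  qin : Q
  delta : Set (Q × Act M × Q)

variable {Q M V : Type}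

/-- `q` has an outgoing reception of `m`. -/
def canRecv (P : Protocol Q M) (q : Q) (m : M) : Prop :=
  ∃ q', (q, Act.rcv m, q') ∈ P.delta

/-- One step of the broadcast network semantics over topology `G`,
performed by vertex `v` taking transition `t`. -/
def Step (G : SimpleGraph V) (P : Protocol Q M) (v : V)
    (t : Q × Act M × Q) (L L' : V → Q) : Prop :=
  t ∈ P.delta ∧ L v = t.1 ∧ L' v = t.2.2 ∧
  (match t.2.1 with
   | Act.tau => ∀ u, u ≠ v → L' u = L u
   | Act.brd m =>
       (∀ u, G.Adj v u →
          ((L u, Act.rcv m, L' u) ∈ P.delta ∨ (¬ canRecv P (L u) m ∧ L' u = L u))) ∧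
       (∀ u, u ≠ v → ¬ G.Adj v u → L' u = L u)
   | Act.rcv _ => False)

def StepAny (G : SimpleGraph V) (P : Protocol Q M) (L L' : V → Q) : Prop :=
  ∃ v t, Step G P v t L L'

def Reach (G : SimpleGraph V) (P : Protocol Q M) : (V → Q) → (V → Q) → Prop :=
  Relation.ReflTransGen (StepAny G P)

def initConf (P : Protocol Q M) : V → Q := fun _ => P.qin

/-- `qf` is coverable over the class of all (finite) graph topologies. -/
def Coverable (P : Protocol Q M) (qf : Q) : Prop :=
  ∃ (V' : Type) (_ : Fintype V') (G : SimpleGraph V') (L : V' → Q),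
    Reach G P (initConf P) L ∧ ∃ v, L v = qf

/-- A tree topology: a prefix-closed finite set of words over ℕ containing ε. -/
structure TreeTopo : Type where
  verts : Finset (List ℕ)
  nil_mem : ([] : List ℕ) ∈ verts
  prefixClosed : ∀ w ∈ verts, ∀ w' : List ℕ, w' <+: w → w' ∈ verts

abbrev TreeTopo.Vert (T : TreeTopo) : Type := {w : List ℕ // w ∈ T.verts}

def TreeTopo.root (T : TreeTopo) : T.Vert := ⟨[], T.nil_mem⟩

/-- The graph of a tree topology: each word `w ++ [x]` is adjacent to its parent `w`. -/
def TreeTopo.graph (T : TreeTopo) : SimpleGraph T.Vert where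
  Adj u v := (∃ x : ℕ, (v : List ℕ) = (u : List ℕ) ++ [x]) ∨
             (∃ x : ℕ, (u : List ℕ) = (v : List ℕ) ++ [x])
  symm := by constructor; intro u v h; exact h.symm
  loopless := by
    constructor
    intro u h
    rcases h with ⟨x, hx⟩ | ⟨x, hx⟩ <;> simpa using congrArg List.length hx

def CoverableWith (T : TreeTopo) (P : Protocol Q M) (qf : Q) : Prop :=
  ∃ L : T.Vert → Q, Reach T.graph P (initConf P) L ∧ ∃ u, L u = qf

def CoverableTreeRoot (P : Protocol Q M) (qf : Q) : Prop :=
  ∃ (T : TreeTopo) (L : T.Vert → Q),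
    Reach T.graph P (initConf P) L ∧ L T.root = qf

/-- `(T, lam)` is the unfolding of graph `G` at vertex `v` to depth `n`. -/
structure IsUnfolding {V : Type} (G : SimpleGraph V) (v : V) (n : ℕ)
    (T : TreeTopo) (lam : T.Vert → V) : Prop where
  root_lbl : lam T.root = v
  depth_le : ∀ w ∈ T.verts, w.length ≤ n
  root_children :
    Set.BijOn lam {u : T.Vert | ∃ x : ℕ, (u : List ℕ) = [x]} (G.neighborSet v)
  children : ∀ (u : T.Vert) (w : List ℕ) (hw : w ∈ T.verts) (x : ℕ),
      (u : List ℕ) = w ++ [x] → (u : List ℕ).length < n →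
      Set.BijOn lam {u' : T.Vert | ∃ y : ℕ, (u' : List ℕ) = (u : List ℕ) ++ [y]}
        (G.neighborSet (lam u) \ {lam ⟨w, hw⟩})
  no_deep : ∀ u : T.Vert, n ≤ (u : List ℕ).length →
      ∀ x : ℕ, (u : List ℕ) ++ [x] ∉ T.verts

/-- Phase tags annotating states: `zero` (phase 0), broadcast phase `j`, reception phase `j`. -/
inductive PTag : Type where
  | zero : PTag
  | bph : ℕ → PTag
  | rph : ℕ → PTag
deriving DecidableEq

def bOf : ℕ → PTag
  | 0 => .zero
  | j+1 => .bph (j+1)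

def rOf : ℕ → PTag
  | 0 => .zero
  | j+1 => .rph (j+1)

/-- `φ` witnesses that `P` is `k`-phase-bounded. -/
def IsPhaseAssignment (k : ℕ) (P : Protocol Q M) (φ : Q → PTag) : Prop :=
  φ P.qin = .zero ∧
  (∀ q : Q, φ q = .zero ∨ ∃ j, 1 ≤ j ∧ j ≤ k ∧ (φ q = .bph j ∨ φ q = .rph j)) ∧
  ∀ t ∈ P.delta,
    (match t.2.1 with
     | Act.tau => φ t.1 = φ t.2.2
     | Act.brd _ =>
         (∃ j, 1 ≤ j ∧ j ≤ k ∧ φ t.1 = .bph j ∧ φ t.2.2 = .bph j) ∨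
         (∃ i, i < k ∧ φ t.1 = rOf i ∧ φ t.2.2 = .bph (i+1))
     | Act.rcv _ =>
         (∃ j, 1 ≤ j ∧ j ≤ k ∧ φ t.1 = .rph j ∧ φ t.2.2 = .rph j) ∨
         (∃ i, i < k ∧ φ t.1 = bOf i ∧ φ t.2.2 = .rph (i+1)) ∨
         (1 ≤ k ∧ φ t.1 = .bph k ∧ φ t.2.2 = .rph k))

def IsPhaseBounded (k : ℕ) (P : Protocol Q M) : Prop :=
  ∃ φ : Q → PTag, IsPhaseAssignment k P φ

/-- The `k`-unfolding `Pₖ` of a protocol `P`. -/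
def unfoldP (P : Protocol Q M) (k : ℕ) : Protocol (Q × PTag) M where
  qin := (P.qin, .zero)
  delta :=
    {t | ∃ q p, (q, Act.tau, p) ∈ P.delta ∧ t = ((q, .zero), Act.tau, (p, .zero))} ∪
    {t | ∃ q p α j, 1 ≤ j ∧ j ≤ k ∧ (q, α, p) ∈ P.delta ∧
        (α = Act.tau ∨ ∃ m, α = Act.rcv m) ∧ t = ((q, .rph j), α, (p, .rph j))} ∪
    {t | ∃ q p α j, 1 ≤ j ∧ j ≤ k ∧ (q, α, p) ∈ P.delta ∧
        (α = Act.tau ∨ ∃ m, α = Act.brd m) ∧ t = ((q, .bph j), α, (p, .bph j))} ∪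
    {t | ∃ q p m j, j < k ∧ (q, Act.brd m, p) ∈ P.delta ∧
        t = ((q, rOf j), Act.brd m, (p, .bph (j+1)))} ∪
    {t | ∃ q p m j, j < k ∧ (q, Act.rcv m, p) ∈ P.delta ∧
        t = ((q, bOf j), Act.rcv m, (p, .rph (j+1)))} ∪
    {t | ∃ q p m, 1 ≤ k ∧ (q, Act.rcv m, p) ∈ P.delta ∧
        t = ((q, .bph k), Act.rcv m, (p, .rph k))}

/-- Star topology: root `none` adjacent to every leaf `some i`, no other edges. -/
def starGraph (ι : Type) : SimpleGraph (Option ι) where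
  Adj u v := (u = none ∧ v ≠ none) ∨ (v = none ∧ u ≠ none)
  symm := by constructor; intro u v h; tauto
  loopless := by constructor; intro u h; tauto

/-- For a 1-phase-bounded protocol with witness `φ`, `Q^b = Q₀ ∪ Q₁^b`. -/
def Qb (φ : Q → PTag) : Set Q := {q | φ q = .zero ∨ φ q = .bph 1}

/-- The set component of the broadcast-print of a star configuration. -/
def bprintSet {ι : Type} (φ : Q → PTag) (L : Option ι → Q) : Set Q :=
  {q | q ∈ Qb φ ∧ ∃ i, L (some i) = q}

/-- The abstract transition relation `⇒` on broadcast-prints. -/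
def PrintStep (P : Protocol Q M) (φ : Q → PTag) :
    (Q × Set Q) → (Q × Set Q) → Prop := fun pr pr' =>
  ∃ (ι : Type) (_ : Fintype ι) (L L' : Option ι → Q),
    StepAny (starGraph ι) P L L' ∧ L none ∈ Qb φ ∧ L' none ∈ Qb φ ∧
    pr = (L none, bprintSet φ L) ∧ pr' = (L' none, bprintSet φ L')

/-- Line topology on `Fin ℓ`: consecutive vertices are adjacent. -/
def lineGraph (ℓ : ℕ) : SimpleGraph (Fin ℓ) where
  Adj i j := (i : ℕ) + 1 = (j : ℕ) ∨ (j : ℕ) + 1 = (i : ℕ)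
  symm := by constructor; intro i j h; tauto
  loopless := by constructor; intro i h; rcases h with h | h <;> omega

/-- `t` is a broadcast transition. -/
def IsBrdT (t : Q × Act M × Q) : Prop := ∃ m, t.2.1 = Act.brd m

/-- In the execution described by `vs, ts` of length `n`, `i` is the first index at
which vertex `u` performs a broadcast. -/
def IsFirstBrd {V' : Type} (vs : ℕ → V') (ts : ℕ → Q × Act M × Q) (n : ℕ)
    (u : V') (i : ℕ) : Prop :=
  i < n ∧ vs i = u ∧ IsBrdT (ts i) ∧ ∀ j < i, vs j = u → ¬ IsBrdT (ts j)

/-- Every transition of `u` occurs no later than every broadcast of `w`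
(i.e. lastBroadcast(u) ≤ firstBroadcast(w)). -/
def BrdOrder {V' : Type} (n : ℕ) (vs : ℕ → V') (ts : ℕ → Q × Act M × Q)
    (u w : V') : Prop :=
  ∀ j j', j < n → j' < n → vs j = u → vs j' = w → IsBrdT (ts j') → j ≤ j'

/-- One application of the pair-coverability operator. -/
def pairStep (P : Protocol Q M) (S : Set (Q × Q)) : Set (Q × Q) :=
  S ∪
  {p | ∃ p₁, (p₁, p.2) ∈ S ∧ (p₁, Act.tau, p.1) ∈ P.delta} ∪
  {p | ∃ p₂, (p.1, p₂) ∈ S ∧ (p₂, Act.tau, p.2) ∈ P.delta} ∪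
  {p | ∃ p₁ p₂ m, (p₁, p₂) ∈ S ∧ (p₂, Act.brd m, p.2) ∈ P.delta ∧
      (p₁, Act.rcv m, p.1) ∈ P.delta} ∪
  {p | ∃ p₂ m, (p.1, p₂) ∈ S ∧ (p₂, Act.brd m, p.2) ∈ P.delta ∧ ¬ canRecv P p.1 m} ∪
  {p | p.1 = P.qin ∧ ∃ q', (p.2, q') ∈ S}

/-- The iteration `S₀ ⊆ S₁ ⊆ …` of the pair-coverability operator. -/
def Siter (P : Protocol Q M) : ℕ → Set (Q × Q)
  | 0 => {(P.qin, P.qin)}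
  | i+1 => pairStep P (Siter P i)


/-- `C₁ ⪯ C₂` for star configurations: equal root states, and for each state
`q ∈ Q⁰ ∪ Q₁ᵇ` the number of non-root vertices in `q` does not decrease. -/
def StarLe {Q ι₁ ι₂ : Type} (φ : Q → PTag)
    (L₁ : Option ι₁ → Q) (L₂ : Option ι₂ → Q) : Prop :=
  L₁ none = L₂ none ∧
  ∀ q ∈ Qb φ,
    Set.ncard {i : ι₁ | L₁ (some i) = q} ≤ Set.ncard {i : ι₂ | L₂ (some i) = q}


section Aux

/-- Targets of reception transitions are never in `Q⁰ ∪ Q₁ᵇ` for 1-phase-bounded protocols. -/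
lemma rcv_target_not_Qb {Q M : Type} {P : Protocol Q M} {φ : Q → PTag}
    (hφ : IsPhaseAssignment 1 P φ) {q q' : Q} {m : M}
    (h : (q, Act.rcv m, q') ∈ P.delta) : q' ∉ Qb φ := by
  have h2 := hφ.2.2 _ h
  simp only at h2
  have hφq : φ q' = PTag.rph 1 := by
    rcases h2 with ⟨j, hj1, hj2, _, hq⟩ | ⟨i, hi, _, hq⟩ | ⟨_, _, hq⟩
    · rwa [le_antisymm hj2 hj1] at hq
    · have hi0 : i = 0 := by omega
      rw [hi0] at hq; exact hq
    · exact hq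
  intro hmem
  rcases hmem with h0 | h0 <;> rw [hφq] at h0 <;> exact absurd h0 (by simp)

/-- Sources of broadcast transitions are in `Q⁰ ∪ Q₁ᵇ` for 1-phase-bounded protocols. -/
lemma brd_source_Qb {Q M : Type} {P : Protocol Q M} {φ : Q → PTag}
    (hφ : IsPhaseAssignment 1 P φ) {q q' : Q} {m : M}
    (h : (q, Act.brd m, q') ∈ P.delta) : q ∈ Qb φ := by
  have h2 := hφ.2.2 _ h
  simp only at h2
  rcases h2 with ⟨j, hj1, hj2, hq, _⟩ | ⟨i, hi, hq, _⟩
  · right; rwa [le_antisymm hj2 hj1] at hq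
  · left
    have hi0 : i = 0 := by omega
    rw [hi0] at hq; exact hq

open Classical in
lemma ncard_update {Q ι : Type} [Fintype ι] (L L' : ι → Q) (i : ι) (qo qn q : Q)
    (hin : L' i = qn) (hout : ∀ l, l ≠ i → L' l = L l) (hi : L i = qo) :
    ({l | L' l = q}).ncard =
      if q = qn ∧ qo ≠ qn then ({l | L l = q}).ncard + 1
      else if q = qo ∧ qo ≠ qn then ({l | L l = q}).ncard - 1
      else ({l | L l = q}).ncard := by
  classical
  by_cases hqo : qo = qn
  · have hset : {l | L' l = q} = {l | L l = q} := by
      ext l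
      simp only [Set.mem_setOf_eq]
      by_cases hl : l = i
      · subst hl; rw [hin, hi, hqo]
      · rw [hout l hl]
    rw [hset]
    simp [hqo]
  · by_cases hq : q = qn
    · have hset : {l | L' l = q} = insert i {l | L l = q} := by
        ext l
        simp only [Set.mem_setOf_eq, Set.mem_insert_iff]
        by_cases hl : l = i
        · subst hl; simp [hin, hq]
        · rw [hout l hl]; simp [hl]
      have hni : i ∉ {l | L l = q} := by
        intro h
        exact hqo (by rw [← hi, ← hq]; exact h)
      rw [hset, Set.ncard_insert_of_notMem hni, if_pos ⟨hq, hqo⟩]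
    · by_cases hq2 : q = qo
      · have hset : {l | L' l = q} = {l | L l = q} \ {i} := by
          ext l
          simp only [Set.mem_setOf_eq, Set.mem_diff, Set.mem_singleton_iff]
          by_cases hl : l = i
          · subst hl
            exact iff_of_false (by rw [hin]; exact fun h => hq h.symm) (by simp)
          · rw [hout l hl]; simp [hl]
        have hmem' : i ∈ {l | L l = q} := by
          rw [Set.mem_setOf_eq, hq2]; exact hi
        rw [hset, Set.ncard_diff_singleton_of_mem hmem',
          if_neg (fun h => hq h.1), if_pos ⟨hq2, hqo⟩]
      · have hset : {l | L' l = q} = {l | L l = q} := by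
          ext l
          simp only [Set.mem_setOf_eq]
          by_cases hl : l = i
          · subst hl
            rw [hin, hi]
            exact iff_of_false (fun h => hq h.symm) (fun h => hq2 h.symm)
          · rw [hout l hl]
        rw [hset, if_neg (fun h => hq h.1), if_neg (fun h => hq2 h.1)]

lemma swap_ncard {Q ι₁ ι₂ : Type} [Fintype ι₁] [Fintype ι₂]
    (L₁ : ι₁ → Q) (L₁' : ι₁ → Q) (L₂ : ι₂ → Q) (L₂' : ι₂ → Q)
    (i : ι₁) (j : ι₂) (qo qn q : Q)
    (hin1 : L₁' i = qn) (hout1 : ∀ l, l ≠ i → L₁' l = L₁ l)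
    (hin2 : L₂' j = qn) (hout2 : ∀ l, l ≠ j → L₂' l = L₂ l)
    (h1 : L₁ i = qo) (h2 : L₂ j = qo)
    (hq : ({l | L₁ l = q}).ncard ≤ ({l | L₂ l = q}).ncard) :
    ({l | L₁' l = q}).ncard ≤ ({l | L₂' l = q}).ncard := by
  rw [ncard_update L₁ L₁' i qo qn q hin1 hout1 h1,
    ncard_update L₂ L₂' j qo qn q hin2 hout2 h2]
  split_ifs <;> omega

end Aux

/-- monotonicity of star networks for 1-phase-bounded protocols. -/
theorem star_monotonicity {Q M ι₁ ι₂ : Type} [Fintype ι₁] [Fintype ι₂]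
    (P : Protocol Q M) (φ : Q → PTag) (hφ : IsPhaseAssignment 1 P φ)
    (C₁ C'₁ : Option ι₁ → Q) (C₂ : Option ι₂ → Q)
    (hstep : StepAny (starGraph ι₁) P C₁ C'₁)
    (hle : StarLe φ C₁ C₂) :
    ∃ C'₂ : Option ι₂ → Q, StarLe φ C'₁ C'₂ ∧ Reach (starGraph ι₂) P C₂ C'₂ := by
  classical
  obtain ⟨v, t, hst⟩ := hstep
  obtain ⟨q, α, q'⟩ := t
  unfold Step at hst
  obtain ⟨ht, hsrc, htgt, hmatch⟩ := hst
  simp only at hsrc htgt hmatch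
  have hroot_eq : C₁ none = C₂ none := hle.1
  cases α with
  | rcv m => exact absurd hmatch (by simp)
  | tau =>
    have hφt : φ q = φ q' := hφ.2.2 _ ht
    cases v with
    | none =>
      refine ⟨fun u => if u = none then q' else C₂ u, ⟨by simp [htgt], ?_⟩, ?_⟩
      · intro qq hqq
        have hs1 : {l : ι₁ | C'₁ (some l) = qq} = {l | C₁ (some l) = qq} := by
          ext l
          rw [Set.mem_setOf_eq, Set.mem_setOf_eq, hmatch (some l) (by simp)]
        rw [hs1]
        have hs2 : {l : ι₂ | (if (some l : Option ι₂) = none then q' else C₂ (some l)) = qq}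
            = {l | C₂ (some l) = qq} := by
          ext l; simp
        calc ({l : ι₁ | C₁ (some l) = qq}).ncard
            ≤ ({l : ι₂ | C₂ (some l) = qq}).ncard := hle.2 qq hqq
          _ = _ := (congrArg Set.ncard hs2).symm
      · refine Relation.ReflTransGen.single ⟨none, (q, Act.tau, q'), ht, ?_, by simp, ?_⟩
        · rw [← hroot_eq]; exact hsrc
        · intro u hu
          simp [hu]
    | some i =>
      by_cases hqb : q ∈ Qb φ
      · have hmem : i ∈ {l : ι₁ | C₁ (some l) = q} := hsrc
        have hpos : 0 < ({l : ι₂ | C₂ (some l) = q}).ncard :=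
          lt_of_lt_of_le ((Set.ncard_pos (Set.toFinite _)).2 ⟨i, hmem⟩) (hle.2 q hqb)
        obtain ⟨j, hj⟩ := (Set.ncard_pos (Set.toFinite _)).1 hpos
        refine ⟨fun u => if u = some j then q' else C₂ u, ⟨?_, ?_⟩, ?_⟩
        · have h0 : C'₁ none = C₁ none := hmatch none (by simp)
          simp [h0, hroot_eq]
        · intro qq hqq
          exact swap_ncard (fun l => C₁ (some l)) (fun l => C'₁ (some l))
            (fun l => C₂ (some l)) (fun l => if (some l : Option ι₂) = some j then q' else C₂ (some l))
            i j q q' qq htgt (fun l hl => hmatch (some l) (by simp [hl]))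
            (by simp) (fun l hl => by simp [hl]) hsrc hj (hle.2 qq hqq)
        · refine Relation.ReflTransGen.single ⟨some j, (q, Act.tau, q'), ht, hj, by simp, ?_⟩
          intro u hu
          simp [hu]
      · have hq'b : q' ∉ Qb φ := by
          intro hh
          apply hqb
          rcases hh with h0 | h0 <;> rw [← hφt] at h0
          · exact Or.inl h0
          · exact Or.inr h0
        refine ⟨C₂, ⟨?_, ?_⟩, Relation.ReflTransGen.refl⟩
        · have h0 : C'₁ none = C₁ none := hmatch none (by simp)
          rw [h0, hroot_eq]
        · intro qq hqq
          have hne1 : qq ≠ q := fun h => hqb (h ▸ hqq)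
          have hne2 : qq ≠ q' := fun h => hq'b (h ▸ hqq)
          have hs1 : {l : ι₁ | C'₁ (some l) = qq} = {l | C₁ (some l) = qq} := by
            ext l
            rw [Set.mem_setOf_eq, Set.mem_setOf_eq]
            by_cases hl : l = i
            · subst hl
              rw [htgt, hsrc]
              exact iff_of_false (fun h => hne2 h.symm) (fun h => hne1 h.symm)
            · rw [hmatch (some l) (by simp [hl])]
          rw [hs1]
          exact hle.2 qq hqq
  | brd m =>
    obtain ⟨hadj, hnadj⟩ := hmatch
    cases v with
    | none =>
      refine ⟨fun u => Option.casesOn u q'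
          (fun l => if h : canRecv P (C₂ (some l)) m then h.choose else C₂ (some l)),
          ⟨htgt, ?_⟩, ?_⟩
      · intro qq hqq
        by_cases hcr : canRecv P qq m
        · have hempty : {l : ι₁ | C'₁ (some l) = qq} = ∅ := by
            ext l
            simp only [Set.mem_setOf_eq, Set.mem_empty_iff_false, iff_false]
            intro hql
            rcases hadj (some l) (Or.inl ⟨rfl, by simp⟩) with hrc | ⟨hnc, hst'⟩
            · exact rcv_target_not_Qb hφ (hql ▸ hrc) hqq
            · have hcq : C₁ (some l) = qq := hst' ▸ hql
              exact hnc (hcq ▸ hcr)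
          rw [hempty]
          simp
        · have hsub1 : {l : ι₁ | C'₁ (some l) = qq} ⊆ {l | C₁ (some l) = qq} := by
            intro l hql
            rcases hadj (some l) (Or.inl ⟨rfl, by simp⟩) with hrc | ⟨hnc, hst'⟩
            · exact absurd hqq (rcv_target_not_Qb hφ (hql ▸ hrc))
            · have hc : C'₁ (some l) = qq := hql
              rw [hst'] at hc
              exact hc
          have hsub2 : {l : ι₂ | C₂ (some l) = qq} ⊆
              {l : ι₂ | (if h : canRecv P (C₂ (some l)) m then h.choose else C₂ (some l)) = qq} := by
            intro l hql
            rw [Set.mem_setOf_eq, dif_neg (by rw [Set.mem_setOf_eq] at hql; rw [hql]; exact hcr)]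
            exact hql
          calc ({l : ι₁ | C'₁ (some l) = qq}).ncard
              ≤ ({l : ι₁ | C₁ (some l) = qq}).ncard :=
                Set.ncard_le_ncard hsub1 (Set.toFinite _)
            _ ≤ ({l : ι₂ | C₂ (some l) = qq}).ncard := hle.2 qq hqq
            _ ≤ _ := Set.ncard_le_ncard hsub2 (Set.toFinite _)
      · refine Relation.ReflTransGen.single
          ⟨none, (q, Act.brd m, q'), ht, by rw [← hroot_eq]; exact hsrc, rfl, ?_, ?_⟩
        · intro u hu
          obtain ⟨l, rfl⟩ : ∃ l, u = some l := by
            cases u with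
            | none => exact absurd hu (SimpleGraph.irrefl _)
            | some l => exact ⟨l, rfl⟩
          by_cases h : canRecv P (C₂ (some l)) m
          · left
            show (C₂ (some l), Act.rcv m,
              (if h : canRecv P (C₂ (some l)) m then h.choose else C₂ (some l))) ∈ P.delta
            rw [dif_pos h]
            exact h.choose_spec
          · right
            refine ⟨h, ?_⟩
            show (if h : canRecv P (C₂ (some l)) m then h.choose else C₂ (some l)) = C₂ (some l)
            rw [dif_neg h]
        · intro u hne hnad
          exfalso
          apply hnad
          cases u with
          | none => exact absurd rfl hne
          | some l => exact Or.inl ⟨rfl, by simp⟩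
    | some i =>
      have hqb : q ∈ Qb φ := brd_source_Qb hφ ht
      have hmem : i ∈ {l : ι₁ | C₁ (some l) = q} := hsrc
      have hpos : 0 < ({l : ι₂ | C₂ (some l) = q}).ncard :=
        lt_of_lt_of_le ((Set.ncard_pos (Set.toFinite _)).2 ⟨i, hmem⟩) (hle.2 q hqb)
      obtain ⟨j, hj⟩ := (Set.ncard_pos (Set.toFinite _)).1 hpos
      have hroot := hadj none (Or.inr ⟨rfl, by simp⟩)
      have e1out : ∀ l : ι₁, l ≠ i → C'₁ (some l) = C₁ (some l) := by
        intro l hl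
        refine hnadj (some l) (by simp [hl]) ?_
        rintro (⟨h0, -⟩ | ⟨h0, -⟩) <;> simp at h0
      refine ⟨fun u => Option.casesOn u (C'₁ none) (fun l => if l = j then q' else C₂ (some l)),
        ⟨rfl, ?_⟩, ?_⟩
      · intro qq hqq
        exact swap_ncard (fun l => C₁ (some l)) (fun l => C'₁ (some l))
          (fun l => C₂ (some l)) (fun l => if l = j then q' else C₂ (some l))
          i j q q' qq htgt e1out (if_pos rfl) (fun l hl => if_neg hl) hsrc hj (hle.2 qq hqq)
      · refine Relation.ReflTransGen.single
          ⟨some j, (q, Act.brd m, q'), ht, hj, by simp, ?_, ?_⟩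
        · intro u hu
          obtain rfl : u = none := by
            rcases hu with ⟨h0, -⟩ | ⟨h0, -⟩
            · simp at h0
            · exact h0
          rw [← hroot_eq]
          exact hroot
        · intro u hne hnad
          obtain ⟨l, rfl⟩ : ∃ l, u = some l := by
            cases u with
            | none => exact absurd (Or.inr ⟨rfl, by simp⟩) hnad
            | some l => exact ⟨l, rfl⟩
          have hlj : l ≠ j := fun h => hne (by rw [h])
          show (if l = j then q' else C₂ (some l)) = C₂ (some l)
          rw [if_neg hlj]


end BN
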